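/- (McDiarmid / polymatroid version of Rado's theorem, aggregation form) Given a bipartite graph between players [n] and keywords [m] with neighborhoods Γ, and monotone submodular functions f_1, ..., f_m with f_k(∅)=0, the set P* = {x ∈ ℝ^n_+ : x_i = ∑_{k ∈ Γ(i)} x_i^k with each x^k ∈ P_k} is a polymatroid defined by f*(S) = ∑_k f_k(S ∩ Γ(k)), where P_k is the polymatroid of f_k restricted to Γ(k). -/
import Mathlib

open Finset

-- one-step extension of a tight feasible vector
lemma extend_step {n : ℕ} (f : Finset (Fin n) → ℝ)
    (hm : ∀ S T, S ⊆ T → f S ≤ f T)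
    (hs : ∀ S T, f (S ∪ T) + f (S ∩ T) ≤ f S + f T)
    (Q : Finset (Fin n)) (a : Fin n) (ha : a ∉ Q)
    (y : Fin n → ℝ) (hy0 : ∀ i, 0 ≤ y i) (hyP : ∀ S, ∑ i ∈ S, y i ≤ f S)
    (hsupp : ∀ i ∉ Q, y i = 0) (htight : ∑ i ∈ Q, y i = f Q) :
    ∃ y' : Fin n → ℝ, (∀ i, y i ≤ y' i) ∧ (∀ i, 0 ≤ y' i) ∧
      (∀ S, ∑ i ∈ S, y' i ≤ f S) ∧ (∀ i ∉ insert a Q, y' i = 0) ∧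
      ∑ i ∈ insert a Q, y' i = f (insert a Q) := by
  classical
  set marg : ℝ := f (insert a Q) - f Q with hmarg
  have hmarg0 : 0 ≤ marg := by
    have := hm Q (insert a Q) (Finset.subset_insert a Q)
    simp [hmarg]; linarith
  set y' : Fin n → ℝ := Function.update y a marg with hy'
  have hya : y a = 0 := hsupp a ha
  have hy'a : y' a = marg := by simp [hy']
  have hy'ne : ∀ i, i ≠ a → y' i = y i := fun i hi => Function.update_of_ne hi _ _
  have hge : ∀ i, y i ≤ y' i := by
    intro i
    by_cases hi : i = a
    · subst hi; rw [hy'a, hya]; exact hmarg0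
    · rw [hy'ne i hi]
  refine ⟨y', hge, fun i => le_trans (hy0 i) (hge i), ?_, ?_, ?_⟩
  · -- feasibility
    intro S
    by_cases haS : a ∈ S
    · have hsplit : ∑ i ∈ S, y' i = y' a + ∑ i ∈ S.erase a, y' i :=
        (Finset.add_sum_erase S y' haS).symm
      have herase : ∑ i ∈ S.erase a, y' i = ∑ i ∈ S.erase a, y i :=
        Finset.sum_congr rfl (fun i hi => hy'ne i (Finset.ne_of_mem_erase hi))
      have hTQ : ∑ i ∈ S.erase a, y i = ∑ i ∈ S.erase a ∩ Q, y i := by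
        symm
        apply Finset.sum_subset Finset.inter_subset_left
        intro i _ hi2
        by_cases hiQ : i ∈ Q
        · exact absurd (Finset.mem_inter.mpr ⟨‹i ∈ S.erase a›, hiQ⟩) hi2
        · exact hsupp i hiQ
      have hyTQ : ∑ i ∈ S.erase a ∩ Q, y i ≤ f (S.erase a ∩ Q) := hyP _
      have hsub2 := hs Q ((S.erase a ∩ Q) ∪ {a})
      have hU : Q ∪ ((S.erase a ∩ Q) ∪ {a}) = insert a Q := by
        ext i
        simp [Finset.mem_union, Finset.mem_inter, Finset.mem_insert, Finset.mem_erase]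
        tauto
      have hI : Q ∩ ((S.erase a ∩ Q) ∪ {a}) = S.erase a ∩ Q := by
        ext i
        simp only [Finset.mem_inter, Finset.mem_union, Finset.mem_singleton,
          Finset.mem_erase]
        constructor
        · rintro ⟨hiQ, (⟨h1, h2⟩ | rfl)⟩
          · exact ⟨h1, h2⟩
          · exact absurd hiQ ha
        · rintro ⟨h1, h2⟩
          exact ⟨h2, Or.inl ⟨h1, h2⟩⟩
      rw [hU, hI] at hsub2
      have hmono2 : f ((S.erase a ∩ Q) ∪ {a}) ≤ f S := by
        apply hm
        intro i hi
        rcases Finset.mem_union.mp hi with hi | hi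
        · exact Finset.mem_of_mem_erase (Finset.mem_inter.mp hi).1
        · rw [Finset.mem_singleton.mp hi]; exact haS
      rw [hsplit, hy'a, herase, hTQ]
      have : marg + f (S.erase a ∩ Q) ≤ f ((S.erase a ∩ Q) ∪ {a}) := by
        rw [hmarg]; linarith
      linarith
    · have : ∑ i ∈ S, y' i = ∑ i ∈ S, y i :=
        Finset.sum_congr rfl (fun i hi => hy'ne i (fun h => haS (h ▸ hi)))
      rw [this]; exact hyP S
  · -- support
    intro i hi
    have hia : i ≠ a := fun h => hi (h ▸ Finset.mem_insert_self a Q)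
    rw [hy'ne i hia]
    exact hsupp i (fun h => hi (Finset.mem_insert_of_mem h))
  · -- tightness
    rw [Finset.sum_insert ha, hy'a]
    have : ∑ i ∈ Q, y' i = ∑ i ∈ Q, y i :=
      Finset.sum_congr rfl (fun i hi => hy'ne i (fun h => ha (h ▸ hi)))
    rw [this, htight, hmarg]
    ring

-- full extension from Q to R ⊇ Q
lemma extend {n : ℕ} (f : Finset (Fin n) → ℝ)
    (hm : ∀ S T, S ⊆ T → f S ≤ f T)
    (hs : ∀ S T, f (S ∪ T) + f (S ∩ T) ≤ f S + f T) :
    ∀ (N : ℕ) (Q R : Finset (Fin n)), (R \ Q).card ≤ N → Q ⊆ R →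
    ∀ (y : Fin n → ℝ), (∀ i, 0 ≤ y i) → (∀ S, ∑ i ∈ S, y i ≤ f S) →
    (∀ i ∉ Q, y i = 0) → (∑ i ∈ Q, y i = f Q) →
    ∃ y' : Fin n → ℝ, (∀ i, y i ≤ y' i) ∧ (∀ i, 0 ≤ y' i) ∧
      (∀ S, ∑ i ∈ S, y' i ≤ f S) ∧ (∀ i ∉ R, y' i = 0) ∧
      ∑ i ∈ R, y' i = f R := by
  classical
  intro N
  induction N with
  | zero =>
      intro Q R hcard hQR y hy0 hyP hsupp htight
      have : R \ Q = ∅ := Finset.card_eq_zero.mp (Nat.le_zero.mp hcard)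
      have hRQ : R = Q := Finset.Subset.antisymm
        (fun i hi => by
          by_contra hiQ
          exact absurd (Finset.mem_sdiff.mpr ⟨hi, hiQ⟩) (this ▸ Finset.notMem_empty i))
        hQR
      exact ⟨y, fun i => le_refl _, hy0, hyP, hRQ ▸ hsupp, hRQ ▸ htight⟩
  | succ N ih =>
      intro Q R hcard hQR y hy0 hyP hsupp htight
      by_cases hQR' : R \ Q = ∅
      · have hRQ : R = Q := Finset.Subset.antisymm
          (fun i hi => by
            by_contra hiQ
            exact absurd (Finset.mem_sdiff.mpr ⟨hi, hiQ⟩) (hQR' ▸ Finset.notMem_empty i))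
          hQR
        exact ⟨y, fun i => le_refl _, hy0, hyP, hRQ ▸ hsupp, hRQ ▸ htight⟩
      · obtain ⟨a, haRQ⟩ := Finset.nonempty_iff_ne_empty.mpr hQR'
        have haR : a ∈ R := (Finset.mem_sdiff.mp haRQ).1
        have haQ : a ∉ Q := (Finset.mem_sdiff.mp haRQ).2
        obtain ⟨y1, hge1, hy10, hy1P, hsupp1, htight1⟩ :=
          extend_step f hm hs Q a haQ y hy0 hyP hsupp htight
        have hcard' : (R \ insert a Q).card ≤ N := by
          have h1 : R \ insert a Q = (R \ Q).erase a := by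
            ext i
            simp [Finset.mem_sdiff, Finset.mem_erase, Finset.mem_insert]
            tauto
          rw [h1]
          have := Finset.card_erase_of_mem haRQ
          omega
        have hsub : insert a Q ⊆ R := Finset.insert_subset haR hQR
        obtain ⟨y', hge', hy'0, hy'P, hsupp', htight'⟩ :=
          ih (insert a Q) R hcard' hsub y1 hy10 hy1P hsupp1 htight1
        exact ⟨y', fun i => le_trans (hge1 i) (hge' i), hy'0, hy'P, hsupp', htight'⟩

-- key greedy bound
lemma key {n : ℕ} (f1 f2 : Finset (Fin n) → ℝ)
    (hm1 : ∀ S T, S ⊆ T → f1 S ≤ f1 T) (hs1 : ∀ S T, f1 (S ∪ T) + f1 (S ∩ T) ≤ f1 S + f1 T)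
    (h01 : f1 ∅ = 0)
    (hm2 : ∀ S T, S ⊆ T → f2 S ≤ f2 T) (hs2 : ∀ S T, f2 (S ∪ T) + f2 (S ∩ T) ≤ f2 S + f2 T)
    (h02 : f2 ∅ = 0) :
    ∀ (N : ℕ) (w : Fin n → ℝ), (Finset.univ.filter (fun i => 0 < w i)).card ≤ N →
    ∀ (x : Fin n → ℝ), (∀ i, 0 ≤ x i) → (∀ S, ∑ i ∈ S, x i ≤ f1 S + f2 S) →
    ∃ y1 y2 : Fin n → ℝ,
      (∀ i, 0 ≤ y1 i) ∧ (∀ S, ∑ i ∈ S, y1 i ≤ f1 S) ∧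
      (∀ i, 0 ≤ y2 i) ∧ (∀ S, ∑ i ∈ S, y2 i ≤ f2 S) ∧
      (∀ i ∉ Finset.univ.filter (fun i => 0 < w i), y1 i = 0) ∧
      (∀ i ∉ Finset.univ.filter (fun i => 0 < w i), y2 i = 0) ∧
      (∑ i ∈ Finset.univ.filter (fun i => 0 < w i), y1 i
        = f1 (Finset.univ.filter (fun i => 0 < w i))) ∧
      (∑ i ∈ Finset.univ.filter (fun i => 0 < w i), y2 i
        = f2 (Finset.univ.filter (fun i => 0 < w i))) ∧
      ∑ i, w i * x i ≤ ∑ i, w i * y1 i + ∑ i, w i * y2 i := by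
  classical
  intro N
  induction N with
  | zero =>
      intro w hcard x hx0 hxP
      have hP : Finset.univ.filter (fun i => 0 < w i) = ∅ :=
        Finset.card_eq_zero.mp (Nat.le_zero.mp hcard)
      have hwle : ∀ i : Fin n, w i ≤ 0 := by
        intro i
        by_contra h
        have : i ∈ Finset.univ.filter (fun i => 0 < w i) := by
          simp [lt_of_not_ge h]
        rw [hP] at this
        exact absurd this (Finset.notMem_empty i)
      refine ⟨fun _ => 0, fun _ => 0, fun i => le_refl 0, ?_, fun i => le_refl 0, ?_,
        fun i _ => rfl, fun i _ => rfl, by simp [hP, h01], by simp [hP, h02], ?_⟩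
      · intro S; simpa using (h01 ▸ hm1 ∅ S (Finset.empty_subset S))
      · intro S; simpa using (h02 ▸ hm2 ∅ S (Finset.empty_subset S))
      · simp only [mul_zero, Finset.sum_const_zero, add_zero]
        apply Finset.sum_nonpos
        intro i _
        exact mul_nonpos_of_nonpos_of_nonneg (hwle i) (hx0 i)
  | succ N ih =>
      intro w hcard x hx0 hxP
      set P : Finset (Fin n) := Finset.univ.filter (fun i => 0 < w i) with hPdef
      by_cases hPne : P = ∅
      · exact ih w (by rw [← hPdef, hPne]; simp) x hx0 hxP
      · have hPne' : P.Nonempty := Finset.nonempty_iff_ne_empty.mpr hPne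
        set μ : ℝ := P.inf' hPne' w with hμdef
        obtain ⟨i₀, hi₀P, hμ⟩ := Finset.exists_mem_eq_inf' hPne' w
        have hμpos : 0 < μ := by
          rw [hμdef, hμ]
          exact (Finset.mem_filter.mp hi₀P).2
        have hμle : ∀ i ∈ P, μ ≤ w i := fun i hi => Finset.inf'_le w hi
        set w' : Fin n → ℝ := fun i => if 0 < w i then w i - μ else w i with hw'def
        have hw'eq : ∀ i, w' i = if 0 < w i then w i - μ else w i := fun i => rfl
        set P' : Finset (Fin n) := Finset.univ.filter (fun i => 0 < w' i) with hP'def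
        have hP'sub : P' ⊆ P := by
          intro i hi
          have hi' : 0 < w' i := (Finset.mem_filter.mp hi).2
          rw [hw'eq i] at hi'
          by_cases h : 0 < w i
          · exact Finset.mem_filter.mpr ⟨Finset.mem_univ i, h⟩
          · rw [if_neg h] at hi'; exact absurd hi' h
        have hi₀P' : i₀ ∉ P' := by
          intro h
          have hthis : 0 < w' i₀ := (Finset.mem_filter.mp h).2
          rw [hw'eq i₀, if_pos ((Finset.mem_filter.mp hi₀P).2)] at hthis
          have : μ = w i₀ := by rw [hμdef, hμ]
          linarith
        have hcard' : P'.card ≤ N := by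
          have h1 : P'.card < P.card := Finset.card_lt_card ⟨hP'sub, fun h => hi₀P' (h hi₀P)⟩
          omega
        obtain ⟨y1', y2', hy10, hy1P, hy20, hy2P, hs1', hs2', ht1', ht2', hkey'⟩ :=
          ih w' hcard' x hx0 hxP
        obtain ⟨y1, hge1, hy1'0, hy1'P, hsupp1, htight1⟩ :=
          extend f1 hm1 hs1 (P \ P').card P' P (le_refl _) hP'sub y1' hy10 hy1P hs1' ht1'
        obtain ⟨y2, hge2, hy2'0, hy2'P, hsupp2, htight2⟩ :=
          extend f2 hm2 hs2 (P \ P').card P' P (le_refl _) hP'sub y2' hy20 hy2P hs2' ht2'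
        refine ⟨y1, y2, hy1'0, hy1'P, hy2'0, hy2'P, hsupp1, hsupp2, htight1, htight2, ?_⟩
        have hw'P : ∀ i ∈ P, 0 ≤ w' i := by
          intro i hi
          rw [hw'eq i, if_pos (Finset.mem_filter.mp hi).2]
          linarith [hμle i hi]
        -- ∑ w z = ∑ w' z + μ * z(P)
        have hsum : ∀ z : Fin n → ℝ, ∑ i, w i * z i = ∑ i, w' i * z i + μ * ∑ i ∈ P, z i := by
          intro z
          have hterm : ∀ i : Fin n, w i * z i
              = w' i * z i + (if i ∈ P then μ * z i else 0) := by
            intro i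
            rw [hw'eq i]
            by_cases h : 0 < w i
            · have hiP : i ∈ P := Finset.mem_filter.mpr ⟨Finset.mem_univ i, h⟩
              rw [if_pos h, if_pos hiP]; ring
            · have hiP : i ∉ P := fun hh => h (Finset.mem_filter.mp hh).2
              rw [if_neg h, if_neg hiP]; ring
          rw [Finset.sum_congr rfl (fun i _ => hterm i), Finset.sum_add_distrib]
          congr 1
          rw [Finset.sum_ite_mem, Finset.univ_inter, Finset.mul_sum]
        -- termwise domination of w'-values
        have hdom : ∀ (yl' yl : Fin n → ℝ), (∀ i, yl' i ≤ yl i) → (∀ i, 0 ≤ yl i) →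
            (∀ i ∉ P', yl' i = 0) → (∀ i ∉ P, yl i = 0) →
            ∑ i, w' i * yl' i ≤ ∑ i, w' i * yl i := by
          intro yl' yl hge hy0' hsupp' hsuppP
          apply Finset.sum_le_sum
          intro i _
          by_cases hiP' : i ∈ P'
          · have hw'pos : 0 < w' i := (Finset.mem_filter.mp hiP').2
            exact mul_le_mul_of_nonneg_left (hge i) (le_of_lt hw'pos)
          · rw [hsupp' i hiP', mul_zero]
            by_cases hiP : i ∈ P
            · exact mul_nonneg (hw'P i hiP) (hy0' i)
            · rw [hsuppP i hiP, mul_zero]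
        have hd1 : ∑ i, w' i * y1' i ≤ ∑ i, w' i * y1 i :=
          hdom y1' y1 hge1 hy1'0 hs1' hsupp1
        have hd2 : ∑ i, w' i * y2' i ≤ ∑ i, w' i * y2 i :=
          hdom y2' y2 hge2 hy2'0 hs2' hsupp2
        have hxPb : ∑ i ∈ P, x i ≤ f1 P + f2 P := hxP P
        have hμx : μ * ∑ i ∈ P, x i ≤ μ * (f1 P + f2 P) :=
          mul_le_mul_of_nonneg_left hxPb (le_of_lt hμpos)
        have e1 := hsum x
        have e2 := hsum y1
        have e3 := hsum y2
        rw [htight1] at e2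
        rw [htight2] at e3
        linarith

open Pointwise in
lemma split {n : ℕ} (f1 f2 : Finset (Fin n) → ℝ)
    (hm1 : ∀ S T, S ⊆ T → f1 S ≤ f1 T) (hs1 : ∀ S T, f1 (S ∪ T) + f1 (S ∩ T) ≤ f1 S + f1 T)
    (h01 : f1 ∅ = 0)
    (hm2 : ∀ S T, S ⊆ T → f2 S ≤ f2 T) (hs2 : ∀ S T, f2 (S ∪ T) + f2 (S ∩ T) ≤ f2 S + f2 T)
    (h02 : f2 ∅ = 0)
    (x : Fin n → ℝ) (hx : ∀ i, 0 ≤ x i)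
    (hP : ∀ S, ∑ i ∈ S, x i ≤ f1 S + f2 S) :
    ∃ y1 y2 : Fin n → ℝ,
      (∀ i, 0 ≤ y1 i) ∧ (∀ S, ∑ i ∈ S, y1 i ≤ f1 S) ∧
      (∀ i, 0 ≤ y2 i) ∧ (∀ S, ∑ i ∈ S, y2 i ≤ f2 S) ∧
      (∀ i, x i = y1 i + y2 i) := by
  classical
  set P1 : Set (Fin n → ℝ) := {y | (∀ i, 0 ≤ y i) ∧ ∀ S, ∑ i ∈ S, y i ≤ f1 S} with hP1
  set P2 : Set (Fin n → ℝ) := {y | (∀ i, 0 ≤ y i) ∧ ∀ S, ∑ i ∈ S, y i ≤ f2 S} with hP2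
  have hclosed : ∀ (f : Finset (Fin n) → ℝ),
      IsClosed {y : Fin n → ℝ | (∀ i, 0 ≤ y i) ∧ ∀ S, ∑ i ∈ S, y i ≤ f S} := by
    intro f
    have heq : {y : Fin n → ℝ | (∀ i, 0 ≤ y i) ∧ ∀ S, ∑ i ∈ S, y i ≤ f S}
        = (⋂ i, {y : Fin n → ℝ | 0 ≤ y i}) ∩ ⋂ S : Finset (Fin n), {y | ∑ i ∈ S, y i ≤ f S} := by
      ext y; simp [Set.mem_iInter]
    rw [heq]
    exact IsClosed.inter
      (isClosed_iInter fun i => isClosed_le continuous_const (continuous_apply i))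
      (isClosed_iInter fun S => isClosed_le
        (continuous_finset_sum _ fun i _ => continuous_apply i) continuous_const)
  have hcompact : ∀ (f : Finset (Fin n) → ℝ),
      IsCompact {y : Fin n → ℝ | (∀ i, 0 ≤ y i) ∧ ∀ S, ∑ i ∈ S, y i ≤ f S} := by
    intro f
    apply IsCompact.of_isClosed_subset (isCompact_Icc (a := (0 : Fin n → ℝ))
      (b := fun i => f {i})) (hclosed f)
    rintro y ⟨h0, hPf⟩
    rw [Set.mem_Icc]
    constructor
    · intro i; exact h0 i
    · intro i
      have := hPf {i}
      simpa using this
  have hconvex : ∀ (f : Finset (Fin n) → ℝ),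
      Convex ℝ {y : Fin n → ℝ | (∀ i, 0 ≤ y i) ∧ ∀ S, ∑ i ∈ S, y i ≤ f S} := by
    intro f y ⟨hy0, hyP⟩ z ⟨hz0, hzP⟩ a b ha hb hab
    constructor
    · intro i
      have : (a • y + b • z) i = a * y i + b * z i := rfl
      rw [this]
      exact add_nonneg (mul_nonneg ha (hy0 i)) (mul_nonneg hb (hz0 i))
    · intro S
      have hterm : ∀ i, (a • y + b • z) i = a * y i + b * z i := fun i => rfl
      rw [Finset.sum_congr rfl (fun i _ => hterm i), Finset.sum_add_distrib,
        ← Finset.mul_sum, ← Finset.mul_sum]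
      calc a * ∑ i ∈ S, y i + b * ∑ i ∈ S, z i
          ≤ a * f S + b * f S := by
            apply add_le_add
            · exact mul_le_mul_of_nonneg_left (hyP S) ha
            · exact mul_le_mul_of_nonneg_left (hzP S) hb
        _ = f S := by rw [← add_mul, hab, one_mul]
  set K : Set (Fin n → ℝ) := P1 + P2 with hK
  have hKcompact : IsCompact K := (hcompact f1).add (hcompact f2)
  have hKconvex : Convex ℝ K := (hconvex f1).add (hconvex f2)
  have hKclosed : IsClosed K := hKcompact.isClosed
  by_contra hcon
  have hxK : x ∉ K := by
    intro hmem
    obtain ⟨y1, hy1, y2, hy2, hsum⟩ := Set.mem_add.mp hmem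
    exact hcon ⟨y1, y2, hy1.1, hy1.2, hy2.1, hy2.2,
      fun i => by rw [← hsum]; rfl⟩
  obtain ⟨φ, u, hu1, hu2⟩ := geometric_hahn_banach_closed_point hKconvex hKclosed hxK
  set w : Fin n → ℝ := fun i => φ (fun j => if i = j then (1:ℝ) else 0) with hw
  have hφ : ∀ y : Fin n → ℝ, φ y = ∑ i, y i * w i := by
    intro y
    conv_lhs => rw [pi_eq_sum_univ y]
    rw [map_sum]
    apply Finset.sum_congr rfl
    intro i _
    rw [map_smul, smul_eq_mul]
  obtain ⟨y1, y2, hy10, hy1P, hy20, hy2P, _, _, _, _, hkey⟩ :=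
    key f1 f2 hm1 hs1 h01 hm2 hs2 h02
      (Finset.univ.filter (fun i => 0 < w i)).card w (le_refl _) x hx hP
  have hmem : y1 + y2 ∈ K := Set.add_mem_add ⟨hy10, hy1P⟩ ⟨hy20, hy2P⟩
  have h1 : φ (y1 + y2) < u := hu1 _ hmem
  have h2 : u < φ x := hu2
  have e1 : φ x = ∑ i, w i * x i := by
    rw [hφ]; exact Finset.sum_congr rfl fun i _ => mul_comm _ _
  have e2 : φ (y1 + y2) = ∑ i, w i * y1 i + ∑ i, w i * y2 i := by
    rw [hφ, ← Finset.sum_add_distrib]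
    apply Finset.sum_congr rfl
    intro i _
    have : (y1 + y2) i = y1 i + y2 i := rfl
    rw [this]; ring
  linarith

lemma decomp {n : ℕ} : ∀ (m : ℕ) (g : Fin m → Finset (Fin n) → ℝ),
    (∀ k, ∀ S T, S ⊆ T → g k S ≤ g k T) →
    (∀ k, ∀ S T, g k (S ∪ T) + g k (S ∩ T) ≤ g k S + g k T) →
    (∀ k, g k ∅ = 0) →
    ∀ x : Fin n → ℝ, (∀ i, 0 ≤ x i) → (∀ S, ∑ i ∈ S, x i ≤ ∑ k, g k S) →
    ∃ y : Fin m → Fin n → ℝ, (∀ k i, 0 ≤ y k i) ∧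
      (∀ k S, ∑ i ∈ S, y k i ≤ g k S) ∧ (∀ i, x i = ∑ k, y k i) := by
  intro m
  induction m with
  | zero =>
      intro g _ _ _ x hx0 hxP
      refine ⟨fun k => 0, fun k i => le_refl 0, fun k S => k.elim0, ?_⟩
      intro i
      have h1 : x i ≤ 0 := by
        have := hxP {i}
        simpa using this
      have : x i = 0 := le_antisymm h1 (hx0 i)
      simp [this]
  | succ m ih =>
      intro g hm hs h0 x hx0 hxP
      set f1 : Finset (Fin n) → ℝ := fun S => ∑ k : Fin m, g k.castSucc S with hf1
      set f2 : Finset (Fin n) → ℝ := g (Fin.last m) with hf2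
      have hm1 : ∀ S T, S ⊆ T → f1 S ≤ f1 T := fun S T hST =>
        Finset.sum_le_sum (fun k _ => hm _ S T hST)
      have hs1 : ∀ S T, f1 (S ∪ T) + f1 (S ∩ T) ≤ f1 S + f1 T := by
        intro S T
        rw [hf1]
        simp only [← Finset.sum_add_distrib]
        exact Finset.sum_le_sum (fun k _ => hs _ S T)
      have h01 : f1 ∅ = 0 := by
        show ∑ k : Fin m, g k.castSucc ∅ = 0
        rw [Finset.sum_congr rfl (fun k _ => h0 k.castSucc)]
        simp
      have hxP' : ∀ S, ∑ i ∈ S, x i ≤ f1 S + f2 S := by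
        intro S
        have := hxP S
        rwa [Fin.sum_univ_castSucc] at this
      obtain ⟨y1, y2, hy10, hy1P, hy20, hy2P, hxsum⟩ :=
        split f1 f2 hm1 hs1 h01 (hm (Fin.last m)) (hs (Fin.last m)) (h0 (Fin.last m))
          x hx0 hxP'
      obtain ⟨y', hy'0, hy'P, hy'sum⟩ :=
        ih (fun k => g k.castSucc) (fun k => hm k.castSucc) (fun k => hs k.castSucc)
          (fun k => h0 k.castSucc) y1 hy10 (fun S => hy1P S)
      refine ⟨Fin.lastCases y2 y', ?_, ?_, ?_⟩
      · intro k i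
        induction k using Fin.lastCases with
        | last => simp only [Fin.lastCases_last]; exact hy20 i
        | cast k => simp only [Fin.lastCases_castSucc]; exact hy'0 k i
      · intro k S
        induction k using Fin.lastCases with
        | last => simp only [Fin.lastCases_last]; exact hy2P S
        | cast k => simp only [Fin.lastCases_castSucc]; exact hy'P k S
      · intro i
        rw [Fin.sum_univ_castSucc]
        simp only [Fin.lastCases_last, Fin.lastCases_castSucc]
        rw [← hy'sum i]
        exact hxsum i

theorem mcdiarmid_aggregation (n m : ℕ)
    (Γ : Fin m → Finset (Fin n))
    (f : Fin m → Finset (Fin n) → ℝ)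
    (hmono : ∀ k, ∀ S T : Finset (Fin n), S ⊆ T → f k S ≤ f k T)
    (hsub : ∀ k, ∀ S T : Finset (Fin n), f k (S ∪ T) + f k (S ∩ T) ≤ f k S + f k T)
    (hf0 : ∀ k, f k ∅ = 0)
    (fStar : Finset (Fin n) → ℝ)
    (hfStar : ∀ S : Finset (Fin n), fStar S = ∑ k, f k (S ∩ Γ k)) :
    (∀ S T : Finset (Fin n), S ⊆ T → fStar S ≤ fStar T) ∧
    (∀ S T : Finset (Fin n), fStar (S ∪ T) + fStar (S ∩ T) ≤ fStar S + fStar T) ∧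
    {x : Fin n → ℝ | (∀ i, 0 ≤ x i) ∧
        ∃ y : Fin m → Fin n → ℝ,
          (∀ k i, 0 ≤ y k i) ∧
          (∀ k i, i ∉ Γ k → y k i = 0) ∧
          (∀ k, ∀ S : Finset (Fin n), S ⊆ Γ k → ∑ i ∈ S, y k i ≤ f k S) ∧
          (∀ i, x i = ∑ k, y k i)}
      = {x : Fin n → ℝ | (∀ i, 0 ≤ x i) ∧
          ∀ S : Finset (Fin n), ∑ i ∈ S, x i ≤ fStar S} := by
  classical
  -- the aggregated per-keyword functions
  set g : Fin m → Finset (Fin n) → ℝ := fun k S => f k (S ∩ Γ k) with hg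
  have hgm : ∀ k, ∀ S T : Finset (Fin n), S ⊆ T → g k S ≤ g k T := by
    intro k S T hST
    exact hmono k _ _ (Finset.inter_subset_inter hST (le_refl _))
  have hunion : ∀ (S T : Finset (Fin n)) (k : Fin m),
      (S ∪ T) ∩ Γ k = (S ∩ Γ k) ∪ (T ∩ Γ k) := fun S T k =>
    Finset.union_inter_distrib_right S T (Γ k)
  have hinter : ∀ (S T : Finset (Fin n)) (k : Fin m),
      (S ∩ T) ∩ Γ k = (S ∩ Γ k) ∩ (T ∩ Γ k) := by
    intro S T k
    ext i
    simp only [Finset.mem_inter]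
    tauto
  have hgs : ∀ k, ∀ S T : Finset (Fin n), g k (S ∪ T) + g k (S ∩ T) ≤ g k S + g k T := by
    intro k S T
    show f k ((S ∪ T) ∩ Γ k) + f k ((S ∩ T) ∩ Γ k) ≤ f k (S ∩ Γ k) + f k (T ∩ Γ k)
    rw [hunion S T k, hinter S T k]
    exact hsub k _ _
  have hg0 : ∀ k, g k ∅ = 0 := by
    intro k
    show f k (∅ ∩ Γ k) = 0
    rw [Finset.empty_inter]
    exact hf0 k
  refine ⟨?_, ?_, ?_⟩
  · intro S T hST
    rw [hfStar, hfStar]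
    exact Finset.sum_le_sum (fun k _ => hgm k S T hST)
  · intro S T
    rw [hfStar, hfStar, hfStar, hfStar, ← Finset.sum_add_distrib, ← Finset.sum_add_distrib]
    exact Finset.sum_le_sum (fun k _ => hgs k S T)
  · ext x
    simp only [Set.mem_setOf_eq]
    constructor
    · rintro ⟨hx0, y, hy0, hyΓ, hyP, hxsum⟩
      refine ⟨hx0, ?_⟩
      intro S
      rw [hfStar]
      have hswap : ∑ i ∈ S, x i = ∑ k, ∑ i ∈ S, y k i := by
        rw [Finset.sum_congr rfl (fun i (_ : i ∈ S) => hxsum i)]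
        exact Finset.sum_comm
      rw [hswap]
      apply Finset.sum_le_sum
      intro k _
      have hdrop : ∑ i ∈ S, y k i = ∑ i ∈ S ∩ Γ k, y k i := by
        symm
        apply Finset.sum_subset Finset.inter_subset_left
        intro i hiS hi2
        apply hyΓ k i
        intro hiΓ
        exact hi2 (Finset.mem_inter.mpr ⟨hiS, hiΓ⟩)
      rw [hdrop]
      exact hyP k (S ∩ Γ k) Finset.inter_subset_right
    · rintro ⟨hx0, hxP⟩
      obtain ⟨y, hy0, hyP, hxsum⟩ := decomp m g hgm hgs hg0 x hx0
        (fun S => by rw [← hfStar S]; exact hxP S)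
      refine ⟨hx0, y, hy0, ?_, ?_, hxsum⟩
      · intro k i hiΓ
        have h1 : ∑ j ∈ ({i} : Finset (Fin n)), y k j ≤ g k {i} := hyP k {i}
        have h2 : g k {i} = 0 := by
          show f k ({i} ∩ Γ k) = 0
          rw [Finset.singleton_inter_of_notMem hiΓ]
          exact hf0 k
        rw [Finset.sum_singleton, h2] at h1
        exact le_antisymm h1 (hy0 k i)
      · intro k S hSΓ
        have h1 : ∑ i ∈ S, y k i ≤ g k S := hyP k S
        have h2 : g k S = f k S := by
          show f k (S ∩ Γ k) = f k S
          rw [Finset.inter_eq_left.mpr hSΓ]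
        rwa [h2] at h1
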